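/- Let D ⊆ ℂ^{n+1} be a domain with 0 ∈ ∂D and let F : D → ℂ^m be holomorphic. Suppose there exist a point p' ∈ ℂ^m and a ℂ-linear map L : ℂ^{n+1} → ℂ^m such that for every sequence (Z_k) in D converging non-tangentially to 0 one has ‖F(Z_k) − p' − L(Z_k)‖ / ‖Z_k‖ → 0 as k → ∞ (i.e. L is the non-tangential differential of F at 0). Then for every sequence (Z_k) in D converging non-tangentially to 0, the differentials dF_{Z_k} converge to L in operator norm. -/

import Mathlib

open Metric Filter Topology

set_option maxHeartbeats 1000000 in
/-- if `L` is the non-tangential differential of a holomorphic map `F` at the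
boundary point `0`, then `dF_{Z_k} → L` (in operator norm) along every sequence converging
non-tangentially to `0`. -/
theorem boundary_jets_stmt4 (n m : ℕ)
    (D : Set (EuclideanSpace ℂ (Fin (n + 1))))
    (hDopen : IsOpen D) (hDconn : IsConnected D)
    (h0 : (0 : EuclideanSpace ℂ (Fin (n + 1))) ∈ frontier D)
    (F : EuclideanSpace ℂ (Fin (n + 1)) → EuclideanSpace ℂ (Fin m))
    (hF : DifferentiableOn ℂ F D)
    (p' : EuclideanSpace ℂ (Fin m))
    (L : EuclideanSpace ℂ (Fin (n + 1)) →L[ℂ] EuclideanSpace ℂ (Fin m))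
    -- `L` is the non-tangential differential of `F` at `0`:
    (hL : ∀ W : ℕ → EuclideanSpace ℂ (Fin (n + 1)),
      (∀ k, W k ∈ D) → Tendsto W atTop (𝓝 0) →
      (∃ c > 0, ∀ k, ‖W k‖ ≤ c * infDist (W k) (frontier D)) →
      Tendsto (fun k => ‖F (W k) - p' - L (W k)‖ / ‖W k‖) atTop (𝓝 0))
    -- any sequence converging non-tangentially to `0`:
    (Z : ℕ → EuclideanSpace ℂ (Fin (n + 1)))
    (hZD : ∀ k, Z k ∈ D) (hZ0 : Tendsto Z atTop (𝓝 0))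
    (hZnt : ∃ c > 0, ∀ k, ‖Z k‖ ≤ c * infDist (Z k) (frontier D)) :
    Tendsto (fun k => fderiv ℂ F (Z k)) atTop (𝓝 L) := by
  classical
  obtain ⟨c, hc0, hcZ⟩ := hZnt
  have h0D : (0 : EuclideanSpace ℂ (Fin (n + 1))) ∉ D := by
    rw [hDopen.frontier_eq] at h0; exact h0.2
  have hfrne : (frontier D).Nonempty := ⟨0, h0⟩
  set r : ℕ → ℝ := fun k => infDist (Z k) (frontier D) with hrdef
  have hZnF : ∀ k, Z k ∉ frontier D := by
    intro k hk; rw [hDopen.frontier_eq] at hk; exact hk.2 (hZD k)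
  have hrpos : ∀ k, 0 < r k := fun k =>
    (isClosed_frontier.notMem_iff_infDist_pos hfrne).mp (hZnF k)
  have hrle : ∀ k, r k ≤ ‖Z k‖ := by
    intro k
    have := infDist_le_dist_of_mem (x := Z k) h0
    simpa [hrdef, dist_zero_right] using this
  have hDne : D ≠ Set.univ := fun h => h0D (h ▸ Set.mem_univ 0)
  have hball : ∀ k, ball (Z k) (r k) ⊆ D := by
    intro k
    obtain ⟨y, hy, hyd⟩ := exists_mem_frontier_infDist_compl_eq_dist (hZD k) hDne
    have h1 : r k ≤ infDist (Z k) Dᶜ := by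
      rw [hyd]; exact infDist_le_dist_of_mem hy
    exact (ball_subset_ball h1).trans ball_infDist_compl_subset
  have hball2 : ∀ k, ball (Z k) (r k / 2) ⊆ D := fun k =>
    (ball_subset_ball (by linarith [hrpos k])).trans (hball k)
  -- Key claim: eventually, the "error" function is small on the half-ball around `Z k`.
  have key : ∀ ε : ℝ, 0 < ε → ∀ᶠ k in atTop,
      ∀ W ∈ ball (Z k) (r k / 2), ‖F W - p' - L W‖ ≤ ε * r k := by
    intro ε hε
    by_contra hcon
    rw [Filter.not_eventually] at hcon
    have hcon' : ∃ᶠ k in atTop, ∃ W ∈ ball (Z k) (r k / 2),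
        ε * r k < ‖F W - p' - L W‖ := by
      refine hcon.mono fun k hk => ?_
      push_neg at hk
      obtain ⟨W, hW1, hW2⟩ := hk
      exact ⟨W, hW1, hW2⟩
    obtain ⟨φ, hφmono, hφ⟩ := extraction_of_frequently_atTop hcon'
    choose W hWball hWlt using hφ
    have hWD : ∀ j, W j ∈ D := fun j => hball2 (φ j) (hWball j)
    have hWne : ∀ j, W j ≠ 0 := fun j h => h0D (h ▸ hWD j)
    have hWnormpos : ∀ j, 0 < ‖W j‖ := fun j => norm_pos_iff.mpr (hWne j)
    have hWdist : ∀ j, dist (W j) (Z (φ j)) < r (φ j) / 2 := fun j =>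
      mem_ball.mp (hWball j)
    have hWnorm : ∀ j, ‖W j‖ ≤ (c + 1/2) * r (φ j) := by
      intro j
      have h1 := hWdist j
      have h2 : ‖W j‖ ≤ ‖Z (φ j)‖ + dist (W j) (Z (φ j)) := by
        rw [dist_eq_norm]
        exact norm_le_norm_add_norm_sub' _ _
      have h3 := hcZ (φ j)
      simp only [hrdef] at *
      linarith
    have hWinf : ∀ j, r (φ j) / 2 ≤ infDist (W j) (frontier D) := by
      intro j
      have h1 : infDist (Z (φ j)) (frontier D)
          ≤ infDist (W j) (frontier D) + dist (Z (φ j)) (W j) :=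
        infDist_le_infDist_add_dist
      have h2 : dist (Z (φ j)) (W j) < r (φ j) / 2 := by
        rw [dist_comm]; exact hWdist j
      simp only [hrdef] at *
      linarith
    have hWtend : Tendsto W atTop (𝓝 0) := by
      refine squeeze_zero_norm (a := fun j => (c + 1/2) * ‖Z (φ j)‖) (fun j => ?_) ?_
      · calc ‖W j‖ ≤ (c + 1/2) * r (φ j) := hWnorm j
          _ ≤ (c + 1/2) * ‖Z (φ j)‖ :=
            mul_le_mul_of_nonneg_left (hrle (φ j)) (by linarith)
      · have h1 : Tendsto (fun j => Z (φ j)) atTop (𝓝 0) :=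
          hZ0.comp hφmono.tendsto_atTop
        simpa using h1.norm.const_mul (c + 1/2)
    have hδ : 0 < ε / (c + 1/2) := div_pos hε (by linarith)
    have hWq : ∀ j, ε / (c + 1/2) ≤ ‖F (W j) - p' - L (W j)‖ / ‖W j‖ := by
      intro j
      rw [div_le_div_iff₀ (by linarith) (hWnormpos j)]
      have h1 : ε * ‖W j‖ ≤ ε * ((c + 1/2) * r (φ j)) :=
        mul_le_mul_of_nonneg_left (hWnorm j) hε.le
      have h2 := hWlt j
      have h3 := hrpos (φ j)
      nlinarith
    have htd := hL W hWD hWtend ⟨2 * c + 1, by linarith, fun j => by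
      calc ‖W j‖ ≤ (c + 1/2) * r (φ j) := hWnorm j
        _ ≤ (2 * c + 1) * infDist (W j) (frontier D) := by
          nlinarith [hWinf j, hrpos (φ j)]⟩
    obtain ⟨j, hj⟩ := (htd.eventually (gt_mem_nhds hδ)).exists
    exact absurd (hWq j) (not_le.mpr hj)
  -- Conclusion via the Schwarz lemma / Cauchy estimate.
  rw [Metric.tendsto_atTop]
  intro ε hε
  have hkey := key (ε / 12) (by linarith)
  rw [eventually_atTop] at hkey
  obtain ⟨N, hN⟩ := hkey
  refine ⟨N, fun k hk => ?_⟩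
  have hb := hN k hk
  have hrk := hrpos k
  have hFd : DifferentiableAt ℂ F (Z k) :=
    hF.differentiableAt (hDopen.mem_nhds (hZD k))
  set T : EuclideanSpace ℂ (Fin (n + 1)) →L[ℂ] EuclideanSpace ℂ (Fin m) :=
    fderiv ℂ F (Z k) - L with hT
  have hTg : HasFDerivAt (fun z => F z - p' - L z) T (Z k) :=
    (hFd.hasFDerivAt.sub_const p').sub L.hasFDerivAt
  have hTv : ∀ v : EuclideanSpace ℂ (Fin (n + 1)), ‖v‖ = 1 → ‖T v‖ ≤ 6 * (ε / 12) := by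
    intro v hv
    set ψ : ℂ → EuclideanSpace ℂ (Fin m) :=
      fun t => F (Z k + t • v) - p' - L (Z k + t • v) with hψ
    have hmap1 : ∀ t : ℂ, t ∈ ball (0 : ℂ) (r k / 2) →
        Z k + t • v ∈ ball (Z k) (r k / 2) := by
      intro t ht
      rw [mem_ball, dist_eq_norm]
      simpa [norm_smul, hv] using mem_ball_zero_iff.mp ht
    have hdiff : DifferentiableOn ℂ ψ (ball (0 : ℂ) (r k / 2)) := by
      intro t ht
      have h1 : DifferentiableAt ℂ (fun t : ℂ => Z k + t • v) t :=
        (differentiableAt_id.smul_const v).const_add _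
      have hm : Z k + t • v ∈ D := hball2 k (hmap1 t ht)
      have h2 : DifferentiableAt ℂ (fun z => F z - p' - L z) (Z k + t • v) := by
        have hFd2 : DifferentiableAt ℂ F (Z k + t • v) :=
          hF.differentiableAt (hDopen.mem_nhds hm)
        exact (hFd2.sub_const p').sub L.differentiable.differentiableAt
      exact (h2.comp t h1).differentiableWithinAt
    have hψ0 : ‖ψ 0‖ ≤ (ε / 12) * r k := by
      have := hb (Z k) (mem_ball_self (by positivity))
      simpa [hψ] using this
    have hmaps : Set.MapsTo ψ (ball (0 : ℂ) (r k / 2))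
        (ball (ψ 0) (3 * (ε / 12) * r k)) := by
      intro t ht
      have h1 : ‖ψ t‖ ≤ (ε / 12) * r k := hb _ (hmap1 t ht)
      rw [mem_ball, dist_eq_norm]
      calc ‖ψ t - ψ 0‖ ≤ ‖ψ t‖ + ‖ψ 0‖ := norm_sub_le _ _
        _ ≤ (ε / 12) * r k + (ε / 12) * r k := add_le_add h1 hψ0
        _ < 3 * (ε / 12) * r k := by nlinarith
    have hder := Complex.norm_deriv_le_div_of_mapsTo_ball hdiff (hmaps.mono_right ball_subset_closedBall)
      (by positivity : (0 : ℝ) < r k / 2)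
    have hline : HasDerivAt (fun t : ℂ => Z k + t • v) v 0 := by
      simpa using ((hasDerivAt_id (0 : ℂ)).smul_const v).const_add (Z k)
    have hφd : HasDerivAt ψ (T v) 0 := by
      have h1 : HasFDerivAt (fun z => F z - p' - L z) T ((fun t : ℂ => Z k + t • v) 0) := by
        simpa using hTg
      exact h1.comp_hasDerivAt 0 hline
    calc ‖T v‖ = ‖deriv ψ 0‖ := by rw [hφd.deriv]
      _ ≤ 3 * (ε / 12) * r k / (r k / 2) := hder
      _ = 6 * (ε / 12) := by field_simp; ring
  have hTnorm : ‖T‖ ≤ 6 * (ε / 12) := by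
    refine T.opNorm_le_bound' (by linarith) fun x hx => ?_
    have hxpos : 0 < ‖x‖ := lt_of_le_of_ne (norm_nonneg x) (Ne.symm hx)
    set v : EuclideanSpace ℂ (Fin (n + 1)) := ((‖x‖⁻¹ : ℝ) : ℂ) • x with hvdef
    have hvnorm : ‖v‖ = 1 := by
      rw [hvdef, norm_smul, Complex.norm_real, Real.norm_eq_abs, abs_inv, abs_norm]
      exact inv_mul_cancel₀ hx
    have h1 := hTv v hvnorm
    have h2 : T x = ((‖x‖ : ℝ) : ℂ) • T v := by
      rw [hvdef, map_smul, smul_smul]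
      norm_cast
      rw [mul_inv_cancel₀ hx]
      simp
    calc ‖T x‖ = ‖x‖ * ‖T v‖ := by
          rw [h2, norm_smul, Complex.norm_real, Real.norm_eq_abs, abs_norm]
      _ ≤ ‖x‖ * (6 * (ε / 12)) := mul_le_mul_of_nonneg_left h1 (norm_nonneg x)
      _ = 6 * (ε / 12) * ‖x‖ := by ring
  rw [dist_eq_norm]
  calc ‖fderiv ℂ F (Z k) - L‖ = ‖T‖ := by rw [hT]
    _ ≤ 6 * (ε / 12) := hTnorm
    _ < ε := by linarith
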